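/- Let p be a prime, F_q a finite field of characteristic p, γ ∈ F_q nonzero, n ≥ 1 an integer, and N a nonnegative integer with p-adic expansion N = b_{e-1}p^{e-1} + ... + b_0. Then the Hamming weight of (x^n + γ)^N in F_q[x] equals the product over d of (b_d + 1). -/

import Mathlib

open Polynomial Finset

lemma aux_sum_lt (p : ℕ) (hp : 2 ≤ p) (c : ℕ → ℕ) (i : ℕ) (hc : ∀ d < i, c d < p) :
    ∑ d ∈ Finset.range i, c d * p ^ d < p ^ i := by
  induction i with
  | zero => simp
  | succ i ih =>
    rw [Finset.sum_range_succ, pow_succ]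
    have h1 := ih (fun d hd => hc d (hd.trans (Nat.lt_succ_self i)))
    have h2 : c i < p := hc i (Nat.lt_succ_self i)
    have h3 : (c i + 1) * p ^ i ≤ p ^ i * p := by
      rw [mul_comm (p ^ i) p]
      exact Nat.mul_le_mul_right _ (by omega)
    rw [add_mul, one_mul] at h3
    omega

lemma aux_digit (p : ℕ) (hp : 2 ≤ p) (c : ℕ → ℕ) (e i : ℕ) (hc : ∀ d < e, c d < p)
    (hi : i < e) :
    (∑ d ∈ Finset.range e, c d * p ^ d) / p ^ i % p = c i := by
  induction e with
  | zero => omega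
  | succ e ih =>
    rw [Finset.sum_range_succ]
    rcases Nat.lt_or_ge i e with h | h
    · have he : c e * p ^ e = (c e * p ^ (e - i - 1) * p) * p ^ i := by
        rw [mul_assoc, mul_assoc, ← pow_succ', ← pow_add]
        congr 2
        omega
      rw [he, Nat.add_mul_div_right _ _ (Nat.pow_pos (n := i) (by omega)),
        Nat.add_mul_mod_self_right]
      exact ih (fun d hd => hc d (hd.trans (Nat.lt_succ_self e))) h
    · have hie : i = e := by omega
      subst hie
      have hS : ∑ d ∈ Finset.range i, c d * p ^ d < p ^ i :=
        aux_sum_lt p hp c i (fun d hd => hc d (hd.trans (Nat.lt_succ_self i)))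
      rw [Nat.add_mul_div_right _ _ (Nat.pow_pos (n := i) (by omega)),
        Nat.div_eq_of_lt hS, zero_add, Nat.mod_eq_of_lt (hc i (Nat.lt_succ_self i))]

lemma aux_recon (p : ℕ) (hp : 2 ≤ p) (e : ℕ) : ∀ k, k < p ^ e →
    ∑ d ∈ Finset.range e, (k / p ^ d % p) * p ^ d = k := by
  induction e with
  | zero => intro k hk; simp at hk ⊢; omega
  | succ e ih =>
    intro k hk
    rw [Finset.sum_range_succ']
    have h1 : ∀ d, k / p ^ (d + 1) % p * p ^ (d + 1) = ((k / p) / p ^ d % p * p ^ d) * p := by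
      intro d
      rw [pow_succ', ← Nat.div_div_eq_div_mul]
      ring
    simp only [h1]
    rw [← Finset.sum_mul, ih (k / p) (by
      rw [Nat.div_lt_iff_lt_mul (by omega)]
      calc k < p ^ (e + 1) := hk
        _ = p ^ e * p := pow_succ p e)]
    simp only [pow_zero, mul_one, Nat.div_one]
    have h2 := Nat.div_add_mod k p
    have h3 : k / p * p = p * (k / p) := Nat.mul_comm _ _
    omega

lemma aux_not_dvd_choose (p : ℕ) (hp : p.Prime) (a j : ℕ) (ha : a < p) (hj : j ≤ a) :
    ¬ p ∣ a.choose j := by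
  intro h
  have h1 : p ∣ a.factorial := by
    rw [← Nat.choose_mul_factorial_mul_factorial hj]
    exact Dvd.dvd.mul_right (Dvd.dvd.mul_right h _) _
  rw [Nat.Prime.dvd_factorial hp] at h1
  omega

theorem stmt_7 (p : ℕ) (hp : p.Prime) (F : Type*) [Field F] [Fintype F] [CharP F p]
    (γ : F) (hγ : γ ≠ 0) (n : ℕ) (hn : 1 ≤ n)
    (e : ℕ) (b : ℕ → ℕ) (hb : ∀ d < e, b d ≤ p - 1)
    (N : ℕ) (hN : N = ∑ d ∈ Finset.range e, b d * p ^ d) :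
    ((X ^ n + C γ) ^ N : F[X]).support.card = ∏ d ∈ Finset.range e, (b d + 1) := by
  classical
  haveI : Fact p.Prime := ⟨hp⟩
  have hp2 : 2 ≤ p := hp.two_le
  have hbp : ∀ d < e, b d < p := fun d hd => by have := hb d hd; omega
  have hNlt : N < p ^ e := hN ▸ aux_sum_lt p hp2 b e hbp
  have hNdig : ∀ i < e, N / p ^ i % p = b i := fun i hi => by
    rw [hN]; exact aux_digit p hp2 b e i hbp hi
  have hLucas : ∀ k ≤ N, (¬ p ∣ N.choose k ↔ ∀ i < e, k / p ^ i % p ≤ b i) := by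
    intro k hk
    have hklt : k < p ^ e := lt_of_le_of_lt hk hNlt
    have hmod := Choose.choose_modEq_prod_range_choose_nat (n := N) (k := k) (p := p) hNlt hklt
    have hprod : ∏ i ∈ Finset.range e, (N / p ^ i % p).choose (k / p ^ i % p)
        = ∏ i ∈ Finset.range e, (b i).choose (k / p ^ i % p) :=
      Finset.prod_congr rfl fun i hi => by rw [hNdig i (Finset.mem_range.mp hi)]
    rw [hprod] at hmod
    have hdvd : p ∣ N.choose k ↔ p ∣ ∏ i ∈ Finset.range e, (b i).choose (k / p ^ i % p) := by
      rw [← Nat.modEq_zero_iff_dvd, ← Nat.modEq_zero_iff_dvd]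
      exact ⟨fun h => hmod.symm.trans h, fun h => hmod.trans h⟩
    rw [hdvd, Prime.dvd_finset_prod_iff hp.prime]
    constructor
    · intro h i hi
      by_contra hgt
      push_neg at hgt
      exact h ⟨i, Finset.mem_range.mpr hi, by
        rw [Nat.choose_eq_zero_of_lt hgt]; exact dvd_zero p⟩
    · rintro h ⟨i, hi, hdvd'⟩
      exact aux_not_dvd_choose p hp (b i) _ (hbp i (Finset.mem_range.mp hi))
        (h i (Finset.mem_range.mp hi)) hdvd'
  set S : Finset ℕ := (Finset.range (N + 1)).filter (fun k => ¬ p ∣ N.choose k) with hS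
  have hScard : S.card = ∏ d ∈ Finset.range e, (b d + 1) := by
    set cbar : (∀ i : Fin e, Fin (b i + 1)) → ℕ → ℕ :=
      fun c d => if h : d < e then (c ⟨d, h⟩ : ℕ) else 0 with hcbar
    set φ : (∀ i : Fin e, Fin (b i + 1)) → ℕ :=
      fun c => ∑ d ∈ Finset.range e, cbar c d * p ^ d with hφ
    have hcbar_le : ∀ c, ∀ d < e, cbar c d ≤ b d := by
      intro c d hd
      simp only [hcbar, dif_pos hd]
      have h1 : (c ⟨d, hd⟩ : ℕ) < b d + 1 := (c ⟨d, hd⟩).isLt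
      omega
    have hcbar_lt : ∀ c, ∀ d < e, cbar c d < p := by
      intro c d hd
      have := hcbar_le c d hd
      have := hbp d hd
      omega
    have hφdig : ∀ c, ∀ i, (hi : i < e) → (φ c) / p ^ i % p = (c ⟨i, hi⟩ : ℕ) := by
      intro c i hi
      have h1 := aux_digit p hp2 (cbar c) e i (hcbar_lt c) hi
      rw [hφ]
      simpa [hcbar, dif_pos hi] using h1
    have hinj : Function.Injective φ := by
      intro c c' h
      funext i
      have h1 := hφdig c i.1 i.isLt
      have h2 := hφdig c' i.1 i.isLt
      rw [h] at h1
      apply Fin.ext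
      rw [Fin.eta] at h1 h2
      exact h1.symm.trans h2
    have himg : S = Finset.image φ Finset.univ := by
      ext k
      simp only [hS, Finset.mem_filter, Finset.mem_range, Nat.lt_succ_iff, Finset.mem_image,
        Finset.mem_univ, true_and]
      constructor
      · rintro ⟨hk, hch⟩
        have hklt : k < p ^ e := lt_of_le_of_lt hk hNlt
        have hd := (hLucas k hk).mp hch
        refine ⟨fun i => ⟨k / p ^ (i : ℕ) % p, by have := hd i.1 i.isLt; omega⟩, ?_⟩
        have heq : ∀ d ∈ Finset.range e,
            cbar (fun i => ⟨k / p ^ (i : ℕ) % p, by have := hd i.1 i.isLt; omega⟩) d * p ^ d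
              = (k / p ^ d % p) * p ^ d := by
          intro d hd'
          simp only [hcbar]
          rw [dif_pos (Finset.mem_range.mp hd')]
        show (∑ d ∈ Finset.range e,
          cbar (fun i => ⟨k / p ^ (i : ℕ) % p, by have := hd i.1 i.isLt; omega⟩) d * p ^ d) = k
        rw [Finset.sum_congr rfl heq]
        exact aux_recon p hp2 e k hklt
      · rintro ⟨c, rfl⟩
        have hkN : φ c ≤ N := by
          rw [hN, hφ]
          exact Finset.sum_le_sum fun d hd =>
            Nat.mul_le_mul_right _ (hcbar_le c d (Finset.mem_range.mp hd))
        refine ⟨hkN, (hLucas _ hkN).mpr fun i hi => ?_⟩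
        rw [hφdig c i hi]
        exact Nat.lt_succ_iff.mp (c ⟨i, hi⟩).isLt
    rw [himg, Finset.card_image_of_injective _ hinj, Finset.card_univ, Fintype.card_pi]
    simp only [Fintype.card_fin]
    exact Fin.prod_univ_eq_prod_range (fun i => b i + 1) e
  have expand : (X ^ n + C γ) ^ N
      = ∑ k ∈ Finset.range (N + 1), C (γ ^ (N - k) * (N.choose k : F)) * X ^ (n * k) := by
    rw [add_pow]
    refine Finset.sum_congr rfl fun k _ => ?_
    rw [map_mul, map_natCast C, ← C_pow, pow_mul]
    ring
  have hsupp : ((X ^ n + C γ) ^ N : F[X]).support = S.image (fun k => n * k) := by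
    ext m
    simp only [mem_support_iff, expand, finset_sum_coeff, coeff_C_mul, coeff_X_pow, mul_ite,
      mul_one, mul_zero]
    constructor
    · intro hm
      obtain ⟨k, hk, hne⟩ := Finset.exists_ne_zero_of_sum_ne_zero hm
      by_cases h : m = n * k
      · refine Finset.mem_image.mpr ⟨k, ?_, h.symm⟩
        rw [hS, Finset.mem_filter]
        refine ⟨hk, fun hdvd => ?_⟩
        apply hne
        rw [if_pos h, (CharP.cast_eq_zero_iff F p _).mpr hdvd, mul_zero]
      · rw [if_neg h] at hne; exact absurd rfl hne
    · intro hm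
      obtain ⟨k, hkS, rfl⟩ := Finset.mem_image.mp hm
      rw [hS, Finset.mem_filter, Finset.mem_range] at hkS
      rw [Finset.sum_eq_single k]
      · rw [if_pos rfl]
        exact mul_ne_zero (pow_ne_zero _ hγ)
          fun h => hkS.2 ((CharP.cast_eq_zero_iff F p _).mp h)
      · intro j _ hjk
        rw [if_neg fun h => hjk (Nat.eq_of_mul_eq_mul_left (Nat.lt_of_lt_of_le Nat.zero_lt_one hn) h).symm]
      · intro h; exact absurd (Finset.mem_range.mpr hkS.1) h
  have hninj : Function.Injective (fun k => n * k) :=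
    fun a a' h => Nat.eq_of_mul_eq_mul_left (Nat.lt_of_lt_of_le Nat.zero_lt_one hn) h
  rw [hsupp, Finset.card_image_of_injective _ hninj, hScard]
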